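/- With A Metzler Hurwitz and P, B nonnegative, if 0 ≤ S ≤ S₀ componentwise and ρ(B(-A)^{-1}P·Diag(S₀)) < 1, then ρ(B(-A)^{-1}P·Diag(S)) < 1, and consequently the only nonnegative solution of 0 = AI + P·Diag(S)BI is I = 0. -/

import Mathlib

open Matrix

/-- A matrix is Metzler if its off-diagonal entries are nonnegative. -/
def IsMetzler {n : ℕ} (A : Matrix (Fin n) (Fin n) ℝ) : Prop :=
  ∀ i j, i ≠ j → 0 ≤ A i j

/-- A matrix is Hurwitz if all its (complex) eigenvalues have negative real part. -/
def IsHurwitz {n : ℕ} (A : Matrix (Fin n) (Fin n) ℝ) : Prop :=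
  ∀ μ ∈ spectrum ℂ (A.map (algebraMap ℝ ℂ)), μ.re < 0

/-- The spectral radius of a real matrix: the supremum of the moduli of its complex
eigenvalues. -/
noncomputable def specRad {n : ℕ} (M : Matrix (Fin n) (Fin n) ℝ) : ℝ :=
  sSup {r : ℝ | ∃ μ ∈ spectrum ℂ (M.map (algebraMap ℝ ℂ)), r = ‖μ‖}

namespace SubAux

open scoped NNReal ENNReal

/-! ### Entrywise facts -/

theorem entry_mul_nonneg {l m p : ℕ} {M : Matrix (Fin l) (Fin m) ℝ} {N : Matrix (Fin m) (Fin p) ℝ}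
    (hM : ∀ i j, 0 ≤ M i j) (hN : ∀ i j, 0 ≤ N i j) : ∀ i j, 0 ≤ (M * N) i j := by
  intro i j
  rw [Matrix.mul_apply]
  exact Finset.sum_nonneg fun k _ => mul_nonneg (hM i k) (hN k j)

theorem entry_pow_nonneg {m : ℕ} {M : Matrix (Fin m) (Fin m) ℝ}
    (hM : ∀ i j, 0 ≤ M i j) : ∀ (k : ℕ) i j, 0 ≤ (M ^ k) i j := by
  intro k
  induction k with
  | zero =>
    intro i j
    rw [pow_zero]
    by_cases h : i = j <;> simp [Matrix.one_apply, h]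
  | succ k ih =>
    rw [pow_succ]
    exact entry_mul_nonneg ih hM

theorem entry_pow_le {m : ℕ} {M N : Matrix (Fin m) (Fin m) ℝ}
    (hM : ∀ i j, 0 ≤ M i j) (hMN : ∀ i j, M i j ≤ N i j) :
    ∀ (k : ℕ) i j, (M ^ k) i j ≤ (N ^ k) i j := by
  have hN : ∀ i j, 0 ≤ N i j := fun i j => (hM i j).trans (hMN i j)
  intro k
  induction k with
  | zero => intro i j; simp
  | succ k ih =>
    intro i j
    rw [pow_succ, pow_succ, Matrix.mul_apply, Matrix.mul_apply]
    refine Finset.sum_le_sum fun l _ => ?_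
    exact mul_le_mul (ih i l) (hMN l j) (hM l j) (entry_pow_nonneg (fun a b => (hM a b).trans (hMN a b)) k i l)

/-! ### Hurwitz facts -/

theorem isUnit_smul_one_sub {n : ℕ} {A : Matrix (Fin n) (Fin n) ℝ} (hH : IsHurwitz A)
    {t : ℝ} (ht : 0 ≤ t) : IsUnit (t • (1 : Matrix (Fin n) (Fin n) ℝ) - A) := by
  rw [Matrix.isUnit_iff_isUnit_det, isUnit_iff_ne_zero]
  intro h0
  have hmap : (t • (1 : Matrix (Fin n) (Fin n) ℝ) - A).map (algebraMap ℝ ℂ)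
      = algebraMap ℂ (Matrix (Fin n) (Fin n) ℂ) (t : ℂ) - A.map (algebraMap ℝ ℂ) := by
    ext i j
    by_cases h : i = j <;>
      simp [Matrix.map_apply, Matrix.one_apply, Matrix.algebraMap_matrix_apply, h]
  have hdet : ((t • (1 : Matrix (Fin n) (Fin n) ℝ) - A).map (algebraMap ℝ ℂ)).det = 0 := by
    rw [← RingHom.mapMatrix_apply, ← RingHom.map_det, h0, map_zero]
  have hmem : (t : ℂ) ∈ spectrum ℂ (A.map (algebraMap ℝ ℂ)) := by
    rw [spectrum.mem_iff]
    intro hu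
    rw [← hmap] at hu
    exact (isUnit_iff_ne_zero.mp ((Matrix.isUnit_iff_isUnit_det _).mp hu)) hdet
  have := hH _ hmem
  rw [Complex.ofReal_re] at this
  linarith

/-! ### Continuity bound for the resolvent (entrywise, pi topology) -/

theorem exists_entry_bound {n : ℕ} (A : Matrix (Fin n) (Fin n) ℝ) (hH : IsHurwitz A) (T : ℝ) :
    ∃ C : ℝ, 0 ≤ C ∧ ∀ t ∈ Set.Icc (0:ℝ) T, ∀ i j,
      |((t • (1 : Matrix (Fin n) (Fin n) ℝ) - A)⁻¹) i j| ≤ C := by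
  set f : ℝ → Matrix (Fin n) (Fin n) ℝ := fun t => t • 1 - A with hf
  have hfc : Continuous f := (continuous_id.smul continuous_const).sub continuous_const
  have hdetc : Continuous fun t => (f t).det := hfc.matrix_det
  have hadjc : Continuous fun t => (f t).adjugate := hfc.matrix_adjugate
  have hdet0 : ∀ t ∈ Set.Icc (0:ℝ) T, (f t).det ≠ 0 := by
    intro t ht
    exact ((Matrix.isUnit_iff_isUnit_det _).mp (isUnit_smul_one_sub hH ht.1)).ne_zero
  set F : ℝ → (Fin n × Fin n) → ℝ := fun t p => ((f t)⁻¹) p.1 p.2 with hF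
  have hFc : ContinuousOn F (Set.Icc 0 T) := by
    rw [continuousOn_pi]
    intro p
    have h1 : ∀ t, F t p = ((f t).det)⁻¹ * (f t).adjugate p.1 p.2 := by
      intro t
      rw [hF]
      simp only [Matrix.inv_def, Matrix.smul_apply, Ring.inverse_eq_inv', smul_eq_mul]
    simp only [h1]
    exact (hdetc.continuousOn.inv₀ hdet0).mul
      (((continuous_apply p.2).comp ((continuous_apply p.1).comp hadjc)).continuousOn)
  obtain ⟨C, hC⟩ := (isCompact_Icc).exists_bound_of_continuousOn hFc
  refine ⟨max C 0, le_max_right _ _, fun t ht i j => ?_⟩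
  have h2 : ‖F t (i, j)‖ ≤ ‖F t‖ := norm_le_pi_norm (F t) (i, j)
  have h3 := hC t ht
  calc |((t • (1 : Matrix (Fin n) (Fin n) ℝ) - A)⁻¹) i j| = ‖F t (i, j)‖ := rfl
    _ ≤ ‖F t‖ := h2
    _ ≤ C := h3
    _ ≤ max C 0 := le_max_left _ _


section Normed

attribute [local instance] Matrix.linftyOpNormedAddCommGroup Matrix.linftyOpNormedRing Matrix.linftyOpNormedAlgebra Matrix.linftyOpNormedSpace

variable {n : ℕ}

example : CompleteSpace (Matrix (Fin n) (Fin n) ℝ) := inferInstance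

example : CompleteSpace (Matrix (Fin n) (Fin n) ℝ) := FiniteDimensional.complete ℝ _

theorem entry_nnnorm_le {l m : ℕ} (M : Matrix (Fin l) (Fin m) ℝ) (i : Fin l) (j : Fin m) :
    ‖M i j‖₊ ≤ ‖M‖₊ := by
  rw [Matrix.linfty_opNNNorm_def]
  exact le_trans (Finset.single_le_sum (f := fun j => ‖M i j‖₊) (fun _ _ => zero_le)
    (Finset.mem_univ j)) (Finset.le_sup (f := fun i => ∑ j, ‖M i j‖₊) (Finset.mem_univ i))

theorem entry_norm_le {l m : ℕ} (M : Matrix (Fin l) (Fin m) ℝ) (i : Fin l) (j : Fin m) :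
    |M i j| ≤ ‖M‖ := by
  have := entry_nnnorm_le M i j
  rw [← NNReal.coe_le_coe] at this
  simpa [Real.norm_eq_abs] using this

/-- Evaluation of a matrix entry, as a continuous linear map. -/
noncomputable def entryCLM (i j : Fin n) : Matrix (Fin n) (Fin n) ℝ →L[ℝ] ℝ :=
  LinearMap.mkContinuous
    { toFun := fun M => M i j
      map_add' := fun _ _ => rfl
      map_smul' := fun _ _ => rfl } 1
    (fun M => by show ‖M i j‖ ≤ 1 * ‖M‖; rw [one_mul, Real.norm_eq_abs]; exact entry_norm_le M i j)

theorem tsum_entry_nonneg {f : ℕ → Matrix (Fin n) (Fin n) ℝ} (hf : Summable f)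
    (h : ∀ k i j, 0 ≤ f k i j) : ∀ i j, 0 ≤ (∑' k, f k) i j := by
  intro i j
  have h1 : entryCLM i j (∑' k, f k) = ∑' k, entryCLM i j (f k) :=
    (entryCLM i j).map_tsum hf
  have h2 : entryCLM i j (∑' k, f k) = (∑' k, f k) i j := rfl
  rw [← h2, h1]
  exact tsum_nonneg fun k => h k i j

theorem norm_le_of_entry_le {M : Matrix (Fin n) (Fin n) ℝ} {c : ℝ} (hc : 0 ≤ c)
    (h : ∀ i j, |M i j| ≤ c) : ‖M‖ ≤ (n : ℝ) * c := by
  rw [Matrix.linfty_opNorm_def]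
  have key : (Finset.univ.sup fun i => ∑ j, ‖M i j‖₊) ≤ (n : ℝ≥0) * c.toNNReal := by
    refine Finset.sup_le fun i _ => ?_
    calc ∑ j, ‖M i j‖₊ ≤ ∑ _j : Fin n, c.toNNReal := Finset.sum_le_sum fun j _ => by
          rw [← NNReal.coe_le_coe]
          simpa [Real.norm_eq_abs, Real.coe_toNNReal _ hc] using h i j
      _ = (n : ℝ≥0) * c.toNNReal := by simp [mul_comm]
  calc ((Finset.univ.sup fun i => ∑ j, ‖M i j‖₊ : ℝ≥0) : ℝ)
      ≤ (((n : ℝ≥0) * c.toNNReal : ℝ≥0) : ℝ) := NNReal.coe_le_coe.mpr key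
    _ = (n : ℝ) * c := by simp [Real.coe_toNNReal _ hc]

/-- Neumann-series positivity of the resolvent for large `t`. -/
theorem inv_nonneg_of_gt_norm {A : Matrix (Fin n) (Fin n) ℝ} (hM : IsMetzler A)
    {t : ℝ} (ht : ‖A‖ < t) :
    ∀ i j, 0 ≤ ((t • (1 : Matrix (Fin n) (Fin n) ℝ) - A)⁻¹) i j := by
  rcases isEmpty_or_nonempty (Fin n) with he | hne
  · exact fun i => isEmptyElim i
  have htpos : 0 < t := (norm_nonneg A).trans_lt ht
  set c : ℝ := t + ‖A‖ with hc
  have hcpos : 0 < c := by positivity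
  set N : Matrix (Fin n) (Fin n) ℝ := A + ‖A‖ • 1 with hNdef
  have hN : ∀ i j, 0 ≤ N i j := by
    intro i j
    by_cases h : i = j
    · subst h
      have : |A i i| ≤ ‖A‖ := entry_norm_le A i i
      simp only [hNdef, Matrix.add_apply, Matrix.smul_apply, Matrix.one_apply_eq, smul_eq_mul,
        mul_one]
      cases abs_le.mp this with | intro h1 h2 => linarith
    · have := hM i j h
      simp only [hNdef, Matrix.add_apply, Matrix.smul_apply, Matrix.one_apply_ne h, smul_eq_mul,
        mul_zero, add_zero]
      exact this
  have hNnorm : ‖N‖ < c := by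
    calc ‖N‖ ≤ ‖A‖ + ‖‖A‖ • (1 : Matrix (Fin n) (Fin n) ℝ)‖ := norm_add_le _ _
      _ = ‖A‖ + ‖A‖ := by rw [norm_smul, norm_one, Real.norm_eq_abs, abs_of_nonneg (norm_nonneg A), mul_one]
      _ < t + ‖A‖ := by linarith
  set x : Matrix (Fin n) (Fin n) ℝ := c⁻¹ • N with hx
  have hxnorm : ‖x‖ < 1 := by
    rw [hx, norm_smul, Real.norm_eq_abs, abs_of_nonneg (inv_nonneg.mpr hcpos.le)]
    rw [inv_mul_lt_iff₀ hcpos, mul_one]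
    exact hNnorm
  have hxent : ∀ i j, 0 ≤ x i j := fun i j => by
    simpa [hx, Matrix.smul_apply, smul_eq_mul] using
      mul_nonneg (inv_nonneg.mpr hcpos.le) (hN i j)
  have hsum : Summable fun k => x ^ k := summable_geometric_of_norm_lt_one hxnorm
  have hXent : ∀ i j, 0 ≤ (∑' k, x ^ k) i j :=
    tsum_entry_nonneg hsum fun k => entry_pow_nonneg hxent k
  have hfactor : t • (1 : Matrix (Fin n) (Fin n) ℝ) - A = c • (1 - x) := by
    rw [hx, smul_sub, smul_smul, mul_inv_cancel₀ hcpos.ne', one_smul, hNdef, hc, add_smul]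
    abel
  have hinv : (t • (1 : Matrix (Fin n) (Fin n) ℝ) - A)⁻¹ = c⁻¹ • ∑' k, x ^ k := by
    apply Matrix.inv_eq_right_inv
    rw [hfactor, smul_mul_assoc, mul_smul_comm, smul_smul, mul_inv_cancel₀ hcpos.ne',
      hsum.one_sub_mul_tsum_pow, one_smul]
  intro i j
  rw [hinv]
  simpa [Matrix.smul_apply, smul_eq_mul] using
    mul_nonneg (inv_nonneg.mpr hcpos.le) (hXent i j)

/-- Step-down lemma: positivity of the resolvent propagates downward. -/
theorem step_down {A : Matrix (Fin n) (Fin n) ℝ} (hH : IsHurwitz A) {s t : ℝ}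
    (hs : 0 ≤ s) (hst : s ≤ t)
    (hRt : ∀ i j, 0 ≤ ((t • (1 : Matrix (Fin n) (Fin n) ℝ) - A)⁻¹) i j)
    (hsmall : (t - s) * ‖(t • (1 : Matrix (Fin n) (Fin n) ℝ) - A)⁻¹‖ < 1) :
    ∀ i j, 0 ≤ ((s • (1 : Matrix (Fin n) (Fin n) ℝ) - A)⁻¹) i j := by
  set Rt : Matrix (Fin n) (Fin n) ℝ := (t • (1 : Matrix (Fin n) (Fin n) ℝ) - A)⁻¹ with hRtdef
  have ht : 0 ≤ t := hs.trans hst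
  have hu : IsUnit (t • (1 : Matrix (Fin n) (Fin n) ℝ) - A).det :=
    (Matrix.isUnit_iff_isUnit_det _).mp (isUnit_smul_one_sub hH ht)
  have hmul : (t • (1 : Matrix (Fin n) (Fin n) ℝ) - A) * Rt = 1 := Matrix.mul_nonsing_inv _ hu
  set x : Matrix (Fin n) (Fin n) ℝ := (t - s) • Rt with hx
  have hxnorm : ‖x‖ < 1 := by
    rw [hx, norm_smul, Real.norm_eq_abs, abs_of_nonneg (by linarith : (0:ℝ) ≤ t - s)]
    exact hsmall
  have hxent : ∀ i j, 0 ≤ x i j := fun i j => by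
    simpa [hx, Matrix.smul_apply, smul_eq_mul] using
      mul_nonneg (by linarith : (0:ℝ) ≤ t - s) (hRt i j)
  have hsum : Summable fun k => x ^ k := summable_geometric_of_norm_lt_one hxnorm
  have hXent : ∀ i j, 0 ≤ (∑' k, x ^ k) i j :=
    tsum_entry_nonneg hsum fun k => entry_pow_nonneg hxent k
  have hfactor : s • (1 : Matrix (Fin n) (Fin n) ℝ) - A
      = (t • (1 : Matrix (Fin n) (Fin n) ℝ) - A) * (1 - x) := by
    rw [hx, mul_sub, mul_one, mul_smul_comm, hmul, sub_smul]
    abel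
  have hinv : (s • (1 : Matrix (Fin n) (Fin n) ℝ) - A)⁻¹ = (∑' k, x ^ k) * Rt := by
    apply Matrix.inv_eq_right_inv
    rw [hfactor, mul_assoc, ← mul_assoc (1 - x), hsum.one_sub_mul_tsum_pow, one_mul, hmul]
  intro i j
  rw [hinv]
  exact entry_mul_nonneg hXent hRt i j

/-- The key fact: for a Metzler Hurwitz matrix `A`, the inverse of `-A` is entrywise
nonnegative. -/
theorem neg_inv_entry_nonneg {A : Matrix (Fin n) (Fin n) ℝ} (hM : IsMetzler A)
    (hH : IsHurwitz A) : ∀ i j, 0 ≤ ((-A)⁻¹) i j := by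
  set T : ℝ := ‖A‖ + 1 with hT
  obtain ⟨C, hC0, hC⟩ := exists_entry_bound A hH T
  set K : ℝ := (n : ℝ) * C + 1 with hK
  have hKpos : 0 < K := by positivity
  have hKbound : ∀ t ∈ Set.Icc (0:ℝ) T, ‖(t • (1 : Matrix (Fin n) (Fin n) ℝ) - A)⁻¹‖ ≤ K := by
    intro t htmem
    calc ‖(t • (1 : Matrix (Fin n) (Fin n) ℝ) - A)⁻¹‖ ≤ (n : ℝ) * C :=
          norm_le_of_entry_le hC0 (hC t htmem)
      _ ≤ K := by rw [hK]; linarith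
  set δ : ℝ := K⁻¹ / 2 with hδ
  have hδpos : 0 < δ := by positivity
  have hδK : δ * K < 1 := by
    rw [hδ, div_mul_eq_mul_div, inv_mul_cancel₀ hKpos.ne']
    norm_num
  have claim : ∀ k : ℕ, ∀ t : ℝ, 0 ≤ t → t ≤ T → T - t ≤ (k : ℝ) * δ →
      ∀ i j, 0 ≤ ((t • (1 : Matrix (Fin n) (Fin n) ℝ) - A)⁻¹) i j := by
    intro k
    induction k with
    | zero =>
      intro t ht0 htT hk
      have : t = T := by push_cast at hk; linarith
      subst this
      exact inv_nonneg_of_gt_norm hM (by rw [hT]; linarith)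
    | succ k ih =>
      intro t ht0 htT hk
      set t' : ℝ := min (t + δ) T with ht'
      have h1 : t ≤ t' := le_min (by linarith) htT
      have h2 : t' ≤ T := min_le_right _ _
      have h3 : 0 ≤ t' := le_trans ht0 h1
      have h4 : T - t' ≤ (k : ℝ) * δ := by
        rcases le_total (t + δ) T with hle | hle
        · rw [ht', min_eq_left hle]
          push_cast at hk
          linarith
        · rw [ht', min_eq_right hle]
          have : (0:ℝ) ≤ (k : ℝ) * δ := by positivity
          linarith
      have hRt' := ih t' h3 h2 h4
      have h5 : t' - t ≤ δ := by
        have := min_le_left (t + δ) T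
        rw [← ht'] at this
        linarith
      refine step_down hH ht0 h1 hRt' ?_
      calc (t' - t) * ‖(t' • (1 : Matrix (Fin n) (Fin n) ℝ) - A)⁻¹‖
          ≤ δ * K := by
            apply mul_le_mul h5 (hKbound t' ⟨h3, h2⟩) (norm_nonneg _) hδpos.le
        _ < 1 := hδK
  obtain ⟨k, hkk⟩ := exists_nat_ge (T / δ)
  have hTk : T - 0 ≤ (k : ℝ) * δ := by
    rw [sub_zero]
    calc T = T / δ * δ := by field_simp
      _ ≤ (k : ℝ) * δ := by
        apply mul_le_mul_of_nonneg_right hkk hδpos.le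
  have := claim k 0 le_rfl (by rw [hT]; positivity) hTk
  simpa [zero_smul, zero_sub] using this

end Normed

section Spectral

attribute [local instance] Matrix.linftyOpNormedAddCommGroup Matrix.linftyOpNormedRing
  Matrix.linftyOpNormedAlgebra Matrix.linftyOpNormedSpace

variable {m : ℕ}

theorem nnnorm_map_algebraMap (M : Matrix (Fin m) (Fin m) ℝ) :
    ‖M.map (algebraMap ℝ ℂ)‖₊ = ‖M‖₊ := by
  simp [Matrix.linfty_opNNNorm_def, Matrix.map_apply]

theorem map_pow_comm (M : Matrix (Fin m) (Fin m) ℝ) (k : ℕ) :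
    (M.map (algebraMap ℝ ℂ)) ^ k = (M ^ k).map (algebraMap ℝ ℂ) := by
  have := map_pow ((algebraMap ℝ ℂ).mapMatrix) M k
  simpa [RingHom.mapMatrix_apply] using this.symm

theorem nnnorm_le_of_entry_le {M N : Matrix (Fin m) (Fin m) ℝ}
    (h0 : ∀ i j, 0 ≤ M i j) (h : ∀ i j, M i j ≤ N i j) : ‖M‖₊ ≤ ‖N‖₊ := by
  rw [Matrix.linfty_opNNNorm_def, Matrix.linfty_opNNNorm_def]
  refine Finset.sup_mono_fun fun i _ => Finset.sum_le_sum fun j _ => ?_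
  rw [← NNReal.coe_le_coe]
  simp only [coe_nnnorm, Real.norm_eq_abs]
  exact abs_le_abs (h i j) (by linarith [h0 i j, h i j])

theorem abs_le_specRad {M : Matrix (Fin m) (Fin m) ℝ} {μ : ℂ}
    (hμ : μ ∈ spectrum ℂ (M.map (algebraMap ℝ ℂ))) : ‖μ‖ ≤ specRad M := by
  rcases isEmpty_or_nonempty (Fin m) with he | hne
  · exact absurd ((Matrix.isUnit_iff_isUnit_det _).mpr
      (by rw [Matrix.det_isEmpty]; exact isUnit_one)) (spectrum.mem_iff.mp hμ)
  · refine le_csSup ⟨‖M.map (algebraMap ℝ ℂ)‖, ?_⟩ ⟨μ, hμ, rfl⟩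
    rintro r ⟨μ', hμ', rfl⟩
    exact spectrum.norm_le_norm_of_mem hμ'

theorem specRad_nonneg_of_nonempty [Nonempty (Fin m)] (M : Matrix (Fin m) (Fin m) ℝ) :
    0 ≤ specRad M := by
  haveI : CompleteSpace (Matrix (Fin m) (Fin m) ℂ) := FiniteDimensional.complete ℂ _
  obtain ⟨μ, hμ⟩ := spectrum.nonempty (M.map (algebraMap ℝ ℂ))
  exact (norm_nonneg μ).trans (abs_le_specRad hμ)

theorem specRad_le_specRad {M N : Matrix (Fin m) (Fin m) ℝ}
    (h0 : ∀ i j, 0 ≤ M i j) (hMN : ∀ i j, M i j ≤ N i j) : specRad M ≤ specRad N := by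
  rcases isEmpty_or_nonempty (Fin m) with he | hne
  · have hempty : ∀ (X : Matrix (Fin m) (Fin m) ℝ),
        {r : ℝ | ∃ μ ∈ spectrum ℂ (X.map (algebraMap ℝ ℂ)), r = ‖μ‖} = ∅ := by
      intro X
      ext r
      simp only [Set.mem_setOf_eq, Set.mem_empty_iff_false, iff_false, not_exists]
      rintro μ ⟨hμ, -⟩
      exact absurd ((Matrix.isUnit_iff_isUnit_det _).mpr
        (by rw [Matrix.det_isEmpty]; exact isUnit_one)) (spectrum.mem_iff.mp hμ)
    rw [specRad, specRad, hempty M, hempty N]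
  · haveI : CompleteSpace (Matrix (Fin m) (Fin m) ℂ) := FiniteDimensional.complete ℂ _
    have gelM := spectrum.pow_nnnorm_pow_one_div_tendsto_nhds_spectralRadius
      (M.map (algebraMap ℝ ℂ))
    have gelN := spectrum.pow_nnnorm_pow_one_div_tendsto_nhds_spectralRadius
      (N.map (algebraMap ℝ ℂ))
    have hle : spectralRadius ℂ (M.map (algebraMap ℝ ℂ))
        ≤ spectralRadius ℂ (N.map (algebraMap ℝ ℂ)) := by
      refine le_of_tendsto_of_tendsto' gelM gelN fun k => ?_
      apply ENNReal.rpow_le_rpow _ (by positivity)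
      rw [map_pow_comm, map_pow_comm, nnnorm_map_algebraMap, nnnorm_map_algebraMap]
      exact_mod_cast ENNReal.coe_le_coe.mpr (nnnorm_le_of_entry_le
        (fun i j => entry_pow_nonneg h0 k i j) (fun i j => entry_pow_le h0 hMN k i j))
    have hN0 : 0 ≤ specRad N := specRad_nonneg_of_nonempty N
    have hbound : spectralRadius ℂ (N.map (algebraMap ℝ ℂ)) ≤ ENNReal.ofReal (specRad N) := by
      rw [spectralRadius]
      refine iSup₂_le fun μ hμ => ?_
      rw [← enorm_eq_nnnorm, ← ofReal_norm]
      exact ENNReal.ofReal_le_ofReal (by exact abs_le_specRad hμ)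
    refine Real.sSup_le ?_ hN0
    rintro r ⟨μ, hμ, rfl⟩
    have h1 : (‖μ‖₊ : ℝ≥0∞) ≤ spectralRadius ℂ (M.map (algebraMap ℝ ℂ)) := by
      rw [spectralRadius]
      exact le_iSup₂ (f := fun (k : ℂ) (_ : k ∈ spectrum ℂ (M.map (algebraMap ℝ ℂ))) =>
        (‖k‖₊ : ℝ≥0∞)) μ hμ
    have h2 : ENNReal.ofReal ‖μ‖ ≤ ENNReal.ofReal (specRad N) := by
      rw [ofReal_norm]
      exact h1.trans (hle.trans hbound)
    exact (ENNReal.ofReal_le_ofReal_iff hN0).mp h2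

theorem one_mem_spectrum {m : ℕ} {G : Matrix (Fin m) (Fin m) ℝ} {x : Fin m → ℝ}
    (hx : x ≠ 0) (h : G.mulVec x = x) :
    (1 : ℂ) ∈ spectrum ℂ (G.map (algebraMap ℝ ℂ)) := by
  have hker : ((1 : Matrix (Fin m) (Fin m) ℝ) - G).mulVec x = 0 := by
    rw [Matrix.sub_mulVec, Matrix.one_mulVec, h, sub_self]
  have hdet : ((1 : Matrix (Fin m) (Fin m) ℝ) - G).det = 0 :=
    Matrix.exists_mulVec_eq_zero_iff.mp ⟨x, hx, hker⟩
  have hdetC : (((1 : Matrix (Fin m) (Fin m) ℝ) - G).map (algebraMap ℝ ℂ)).det = 0 := by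
    rw [← RingHom.mapMatrix_apply, ← RingHom.map_det, hdet, map_zero]
  have hmap : ((1 : Matrix (Fin m) (Fin m) ℝ) - G).map (algebraMap ℝ ℂ)
      = 1 - G.map (algebraMap ℝ ℂ) := by
    ext i j
    by_cases hij : i = j <;> simp [Matrix.map_apply, Matrix.one_apply, hij]
  rw [spectrum.mem_iff, _root_.map_one]
  intro hu
  rw [← hmap] at hu
  exact (isUnit_iff_ne_zero.mp ((Matrix.isUnit_iff_isUnit_det _).mp hu)) hdetC

end Spectral

end SubAux

theorem subthreshold_only_trivial_solution {n m : ℕ}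
    (A : Matrix (Fin n) (Fin n) ℝ) (hM : IsMetzler A) (hH : IsHurwitz A)
    (P : Matrix (Fin n) (Fin m) ℝ) (B : Matrix (Fin m) (Fin n) ℝ)
    (hP : ∀ i j, 0 ≤ P i j) (hB : ∀ i j, 0 ≤ B i j)
    (S S₀ : Fin m → ℝ) (hS : ∀ i, 0 ≤ S i) (hSS₀ : ∀ i, S i ≤ S₀ i)
    (hρ : specRad (B * (-A)⁻¹ * P * Matrix.diagonal S₀) < 1) :
    specRad (B * (-A)⁻¹ * P * Matrix.diagonal S) < 1 ∧
      ∀ I : Fin n → ℝ, (∀ i, 0 ≤ I i) →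
        0 = A.mulVec I + (P * Matrix.diagonal S * B).mulVec I → I = 0 := by
  classical
  have hAinv : ∀ i j, 0 ≤ ((-A)⁻¹) i j := SubAux.neg_inv_entry_nonneg hM hH
  have hGt : ∀ i j, 0 ≤ (B * (-A)⁻¹ * P) i j :=
    SubAux.entry_mul_nonneg (SubAux.entry_mul_nonneg hB hAinv) hP
  have hGS0 : ∀ i j, 0 ≤ (B * (-A)⁻¹ * P * Matrix.diagonal S) i j := by
    intro i j
    rw [Matrix.mul_diagonal]
    exact mul_nonneg (hGt i j) (hS j)
  have hGle : ∀ i j, (B * (-A)⁻¹ * P * Matrix.diagonal S) i j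
      ≤ (B * (-A)⁻¹ * P * Matrix.diagonal S₀) i j := by
    intro i j
    rw [Matrix.mul_diagonal, Matrix.mul_diagonal]
    exact mul_le_mul_of_nonneg_left (hSS₀ j) (hGt i j)
  have hspec : specRad (B * (-A)⁻¹ * P * Matrix.diagonal S)
      ≤ specRad (B * (-A)⁻¹ * P * Matrix.diagonal S₀) :=
    SubAux.specRad_le_specRad hGS0 hGle
  have hρS : specRad (B * (-A)⁻¹ * P * Matrix.diagonal S) < 1 := hspec.trans_lt hρ
  refine ⟨hρS, fun I hI heq => ?_⟩
  have hdetA : IsUnit (-A).det := by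
    have h := SubAux.isUnit_smul_one_sub hH (le_refl (0:ℝ))
    rw [zero_smul, zero_sub] at h
    exact (Matrix.isUnit_iff_isUnit_det _).mp h
  have hAI : A.mulVec I = -((P * Matrix.diagonal S * B).mulVec I) :=
    eq_neg_of_add_eq_zero_left heq.symm
  set x : Fin m → ℝ := B.mulVec I with hxdef
  have hnegA : (-A).mulVec I = (P * Matrix.diagonal S * B).mulVec I := by
    rw [Matrix.neg_mulVec, hAI, neg_neg]
  have hinvA : ∀ v : Fin n → ℝ, (-A)⁻¹.mulVec ((-A).mulVec v) = v := by
    intro v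
    rw [Matrix.mulVec_mulVec, Matrix.nonsing_inv_mul _ hdetA, Matrix.one_mulVec]
  have hassoc : B * (-A)⁻¹ * P * Matrix.diagonal S * B
      = B * ((-A)⁻¹ * (P * Matrix.diagonal S * B)) := by
    simp only [Matrix.mul_assoc]
  have hGx : (B * (-A)⁻¹ * P * Matrix.diagonal S).mulVec x = x := by
    calc (B * (-A)⁻¹ * P * Matrix.diagonal S).mulVec (B.mulVec I)
        = (B * (-A)⁻¹ * P * Matrix.diagonal S * B).mulVec I := by
          rw [Matrix.mulVec_mulVec]
      _ = B.mulVec ((-A)⁻¹.mulVec ((P * Matrix.diagonal S * B).mulVec I)) := by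
          simp only [Matrix.mulVec_mulVec, Matrix.mul_assoc]
      _ = B.mulVec ((-A)⁻¹.mulVec ((-A).mulVec I)) := by rw [hnegA]
      _ = B.mulVec I := by rw [hinvA]
  by_cases hx0 : x = 0
  · have hQI : (P * Matrix.diagonal S * B).mulVec I = 0 := by
      rw [← Matrix.mulVec_mulVec, ← hxdef, hx0, Matrix.mulVec_zero]
    have hA0 : (-A).mulVec I = 0 := by rw [hnegA, hQI]
    have h6 := congrArg (fun v => (-A)⁻¹.mulVec v) hA0
    simp only [Matrix.mulVec_zero] at h6
    rw [hinvA I] at h6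
    exact h6
  · exfalso
    have h1mem := SubAux.one_mem_spectrum hx0 hGx
    have h1le := SubAux.abs_le_specRad h1mem
    rw [norm_one] at h1le
    linarith
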